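/- For every integer n ≥ 1, Ω'_n = Ω_n; equivalently, every valid configuration x : ℤ^2 → T'_n takes all its values in the subset T_n. -/

import Mathlib

structure WangTile (C : Type*) where
  right : C
  top : C
  left : C
  bottom : C
deriving DecidableEq

abbrev Lbl : Type := ℤ × ℤ × ℤ

def Vn (n : ℤ) : Set Lbl :=
  {v | 0 ≤ v.1 ∧ v.1 ≤ v.2.1 ∧ v.2.1 ≤ 1 ∧ v.2.1 ≤ v.2.2 ∧ v.2.2 ≤ n + 1}

def hatT {C : Type*} (t : WangTile C) : WangTile C :=
  ⟨t.top, t.right, t.bottom, t.left⟩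

def whiteTiles (n : ℤ) : Set (WangTile Lbl) :=
  {t | ∃ i j : ℤ, 1 ≤ i ∧ i ≤ n ∧ 1 ≤ j ∧ j ≤ n ∧
    t = ⟨(1, 1, i + 1), (1, 1, j + 1), (1, 1, i), (1, 1, j)⟩}

def blueH (n : ℤ) : Set (WangTile Lbl) :=
  {t | ∃ i : ℤ, 0 ≤ i ∧ i ≤ n ∧ t = ⟨(0, 0, i + 1), (1, 1, 1), (0, 0, i), (1, 1, n)⟩}

def greenH (n : ℤ) : Set (WangTile Lbl) :=
  {t | ∃ i : ℤ, 0 ≤ i ∧ i ≤ n ∧ t = ⟨(0, 1, i + 1), (1, 1, 1), (0, 0, i), (1, 1, n + 1)⟩}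

def yellowH (n : ℤ) : Set (WangTile Lbl) :=
  {t | ∃ i : ℤ, 1 ≤ i ∧ i ≤ n ∧ t = ⟨(0, 1, i + 1), (1, 1, 2), (0, 1, i), (1, 1, n + 1)⟩}

def antiH (n : ℤ) : Set (WangTile Lbl) :=
  {t | ∃ i : ℤ, 1 ≤ i ∧ i ≤ n ∧ t = ⟨(0, 0, i + 1), (1, 1, 2), (0, 1, i), (1, 1, n)⟩}

def junctionTile (n k l r s : ℤ) : WangTile Lbl :=
  ⟨(0, k, l), (0, r, s), (0, s, r + n), (0, l, k + n)⟩

def jPairs : Set (ℤ × ℤ) := {(0, 0), (0, 1), (1, 1)}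

def junctions (n : ℤ) : Set (WangTile Lbl) :=
  {t | ∃ k l r s : ℤ, (k, l) ∈ jPairs ∧ (r, s) ∈ jPairs ∧ t = junctionTile n k l r s}

def Text (n : ℤ) : Set (WangTile Lbl) :=
  whiteTiles n ∪ blueH n ∪ greenH n ∪ yellowH n ∪ antiH n ∪
    hatT '' blueH n ∪ hatT '' greenH n ∪ hatT '' yellowH n ∪ hatT '' antiH n ∪ junctions n

def Dset (n : ℤ) : Set (WangTile Lbl) :=
  {(⟨(0, 0, n + 1), (1, 1, 1), (0, 0, n), (1, 1, n)⟩ : WangTile Lbl),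
    hatT (⟨(0, 0, n + 1), (1, 1, 1), (0, 0, n), (1, 1, n)⟩ : WangTile Lbl),
    junctionTile n 0 0 1 1, junctionTile n 1 1 0 0}

def Tmet (n : ℤ) : Set (WangTile Lbl) :=
  Text n \ (antiH n ∪ hatT '' antiH n ∪ Dset n)

def ValidConfig {C : Type*} (T : Set (WangTile C)) (x : ℤ × ℤ → WangTile C) : Prop :=
  (∀ m, x m ∈ T) ∧
    (∀ m : ℤ × ℤ, (x m).right = (x (m.1 + 1, m.2)).left) ∧
    (∀ m : ℤ × ℤ, (x m).top = (x (m.1, m.2 + 1)).bottom)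

def ValidPattern {C : Type*} (T : Set (WangTile C)) (w h : ℕ) (p : ℕ → ℕ → WangTile C) : Prop :=
  (∀ i j, i < w → j < h → p i j ∈ T) ∧
    (∀ i j, i + 1 < w → j < h → (p i j).right = (p (i + 1) j).left) ∧
    (∀ i j, i < w → j + 1 < h → (p i j).top = (p i (j + 1)).bottom)

def bottomWord {C : Type*} (w : ℕ) (p : ℕ → ℕ → WangTile C) : List C :=
  (List.range w).map fun i => (p i 0).bottom

def topWord {C : Type*} (w h : ℕ) (p : ℕ → ℕ → WangTile C) : List C :=
  (List.range w).map fun i => (p i (h - 1)).top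

def leftWord {C : Type*} (h : ℕ) (p : ℕ → ℕ → WangTile C) : List C :=
  (List.range h).map fun j => (p 0 j).left

def rightWord {C : Type*} (w h : ℕ) (p : ℕ → ℕ → WangTile C) : List C :=
  (List.range h).map fun j => (p (w - 1) j).right

def tau (n : ℤ) (v : Lbl) : List Lbl :=
  if v.1 = v.2.2 then
    (0, v.1 - v.2.1 + 1, n + 1) :: List.replicate (n - v.2.2).toNat (1, 1, n + 1)
  else
    (0, v.1 - v.2.1 + 1, n) ::
      (List.replicate (v.2.2 - v.1 - 1).toNat (1, 1, n) ++
        List.replicate (n + 1 - v.2.2).toNat (1, 1, n + 1))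

namespace Stmt14Aux

lemma mem_cases {n : ℤ} {t : WangTile Lbl} (ht : t ∈ Text n) :
    (∃ i j : ℤ, 1 ≤ i ∧ i ≤ n ∧ 1 ≤ j ∧ j ≤ n ∧ t = ⟨(1,1,i+1),(1,1,j+1),(1,1,i),(1,1,j)⟩) ∨
    (∃ i : ℤ, 0 ≤ i ∧ i ≤ n ∧ t = ⟨(0,0,i+1),(1,1,1),(0,0,i),(1,1,n)⟩) ∨
    (∃ i : ℤ, 0 ≤ i ∧ i ≤ n ∧ t = ⟨(0,1,i+1),(1,1,1),(0,0,i),(1,1,n+1)⟩) ∨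
    (∃ i : ℤ, 1 ≤ i ∧ i ≤ n ∧ t = ⟨(0,1,i+1),(1,1,2),(0,1,i),(1,1,n+1)⟩) ∨
    (∃ i : ℤ, 1 ≤ i ∧ i ≤ n ∧ t = ⟨(0,0,i+1),(1,1,2),(0,1,i),(1,1,n)⟩) ∨
    (∃ i : ℤ, 0 ≤ i ∧ i ≤ n ∧ t = ⟨(1,1,1),(0,0,i+1),(1,1,n),(0,0,i)⟩) ∨
    (∃ i : ℤ, 0 ≤ i ∧ i ≤ n ∧ t = ⟨(1,1,1),(0,1,i+1),(1,1,n+1),(0,0,i)⟩) ∨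
    (∃ i : ℤ, 1 ≤ i ∧ i ≤ n ∧ t = ⟨(1,1,2),(0,1,i+1),(1,1,n+1),(0,1,i)⟩) ∨
    (∃ i : ℤ, 1 ≤ i ∧ i ≤ n ∧ t = ⟨(1,1,2),(0,0,i+1),(1,1,n),(0,1,i)⟩) ∨
    (∃ k l r s : ℤ, ((k=0∧l=0)∨(k=0∧l=1)∨(k=1∧l=1)) ∧ ((r=0∧s=0)∨(r=0∧s=1)∨(r=1∧s=1)) ∧
      t = ⟨(0,k,l),(0,r,s),(0,s,r+n),(0,l,k+n)⟩) := by
  simp only [Text, Set.mem_union, Set.mem_image] at ht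
  rcases ht with ((((((((hw|hb)|hg)|hy)|ha)|hhb)|hhg)|hhy)|hha)|hj
  · exact Or.inl hw
  · exact Or.inr (Or.inl hb)
  · exact Or.inr (Or.inr (Or.inl hg))
  · exact Or.inr (Or.inr (Or.inr (Or.inl hy)))
  · exact Or.inr (Or.inr (Or.inr (Or.inr (Or.inl ha))))
  · obtain ⟨t', ⟨i, h1, h2, rfl⟩, rfl⟩ := hhb
    exact Or.inr (Or.inr (Or.inr (Or.inr (Or.inr (Or.inl ⟨i, h1, h2, rfl⟩)))))
  · obtain ⟨t', ⟨i, h1, h2, rfl⟩, rfl⟩ := hhg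
    exact Or.inr (Or.inr (Or.inr (Or.inr (Or.inr (Or.inr (Or.inl ⟨i, h1, h2, rfl⟩))))))
  · obtain ⟨t', ⟨i, h1, h2, rfl⟩, rfl⟩ := hhy
    exact Or.inr (Or.inr (Or.inr (Or.inr (Or.inr (Or.inr (Or.inr (Or.inl ⟨i, h1, h2, rfl⟩)))))))
  · obtain ⟨t', ⟨i, h1, h2, rfl⟩, rfl⟩ := hha
    exact Or.inr (Or.inr (Or.inr (Or.inr (Or.inr (Or.inr (Or.inr (Or.inr (Or.inl ⟨i, h1, h2, rfl⟩))))))))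
  · obtain ⟨k, l, r, s, hkl, hrs, rfl⟩ := hj
    refine Or.inr (Or.inr (Or.inr (Or.inr (Or.inr (Or.inr (Or.inr (Or.inr (Or.inr ⟨k,l,r,s, ?_, ?_, rfl⟩))))))))
    · simpa [jPairs, Prod.ext_iff] using hkl
    · simpa [jPairs, Prod.ext_iff] using hrs

structure TF (n : ℤ) (t : WangTile Lbl) : Prop where
  rl : t.right.1 = t.left.1
  tb : t.top.1 = t.bottom.1
  l1 : t.left.1 = 0 ∨ t.left.1 = 1
  b1 : t.bottom.1 = 0 ∨ t.bottom.1 = 1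
  l21 : t.left.2.1 = 0 ∨ t.left.2.1 = 1
  b21 : t.bottom.2.1 = 0 ∨ t.bottom.2.1 = 1
  vrow : t.left.1 = 1 → t.top.2.2 = t.bottom.2.2 + 1 ∧ 0 ≤ t.bottom.2.2 ∧ t.bottom.2.2 ≤ n
  hrow : t.left.1 = 0 → t.top.2.2 = t.left.2.1 + t.bottom.1 ∧ t.bottom.2.2 = n + t.right.2.1
  hcol : t.bottom.1 = 1 → t.right.2.2 = t.left.2.2 + 1 ∧ 0 ≤ t.left.2.2 ∧ t.left.2.2 ≤ n
  vcol : t.bottom.1 = 0 → t.right.2.2 = t.bottom.2.1 + t.left.1 ∧ t.left.2.2 = n + t.top.2.1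
  junc : t.left.1 = 0 → t.bottom.1 = 0 → t.left.2.2 ≤ t.left.2.1 + n
  nol : t.left ≠ (0, 0, n + 1)
  nob : t.bottom ≠ (0, 0, n + 1)

lemma facts {n : ℤ} (hn : 1 ≤ n) {t : WangTile Lbl} (ht : t ∈ Text n) : TF n t := by
  rcases mem_cases ht with ⟨i,j,h1,h2,h3,h4,rfl⟩|⟨i,h1,h2,rfl⟩|⟨i,h1,h2,rfl⟩|⟨i,h1,h2,rfl⟩|
    ⟨i,h1,h2,rfl⟩|⟨i,h1,h2,rfl⟩|⟨i,h1,h2,rfl⟩|⟨i,h1,h2,rfl⟩|⟨i,h1,h2,rfl⟩|⟨k,l,r,s,hkl,hrs,rfl⟩ <;>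
  constructor <;> simp [Prod.ext_iff] <;> omega

end Stmt14Aux

namespace Stmt14Aux

def Pb (x : ℤ × ℤ → WangTile Lbl) (b : ℤ) : ℤ := (x (0, b)).left.1
def Qb (x : ℤ × ℤ → WangTile Lbl) (a : ℤ) : ℤ := (x (a, 0)).bottom.1

variable {n : ℤ} {x : ℤ × ℤ → WangTile Lbl}

lemma hR (hv : ValidConfig (Text n) x) (a b : ℤ) : (x (a, b)).right = (x (a+1, b)).left :=
  hv.2.1 (a, b)

lemma hT (hv : ValidConfig (Text n) x) (a b : ℤ) : (x (a, b)).top = (x (a, b+1)).bottom :=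
  hv.2.2 (a, b)

lemma hF (hn : 1 ≤ n) (hv : ValidConfig (Text n) x) (a b : ℤ) : TF n (x (a, b)) :=
  facts hn (hv.1 (a, b))

lemma hP (hn : 1 ≤ n) (hv : ValidConfig (Text n) x) (a b : ℤ) :
    (x (a, b)).left.1 = Pb x b := by
  have key : ∀ c : ℤ, (x (c, b)).left.1 = (x (c+1, b)).left.1 := by
    intro c
    rw [← hR hv c b, (hF hn hv c b).rl]
  induction a using Int.induction_on with
  | zero => rfl
  | succ a ih => rw [← key a, ih]
  | pred a ih => rw [key (-a-1)]; convert ih using 3; ring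
  
lemma hQ (hn : 1 ≤ n) (hv : ValidConfig (Text n) x) (a b : ℤ) :
    (x (a, b)).bottom.1 = Qb x a := by
  have key : ∀ c : ℤ, (x (a, c)).bottom.1 = (x (a, c+1)).bottom.1 := by
    intro c
    rw [← hT hv a c, (hF hn hv a c).tb]
  induction b using Int.induction_on with
  | zero => rfl
  | succ b ih => rw [← key b, ih]
  | pred b ih => rw [key (-b-1)]; convert ih using 3; ring

lemma Pb01 (hn : 1 ≤ n) (hv : ValidConfig (Text n) x) (b : ℤ) : Pb x b = 0 ∨ Pb x b = 1 :=
  (hF hn hv 0 b).l1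

lemma Qb01 (hn : 1 ≤ n) (hv : ValidConfig (Text n) x) (a : ℤ) : Qb x a = 0 ∨ Qb x a = 1 :=
  (hF hn hv a 0).b1

/-- vertical chain of third coordinates through rows with `Pb = 1` -/
lemma chainV (hn : 1 ≤ n) (hv : ValidConfig (Text n) x) (a b g : ℤ) (h1 : 1 ≤ g)
    (hmid : ∀ i : ℤ, 0 < i → i < g → Pb x (b + i) = 1) :
    (x (a, b + g)).bottom.2.2 = (x (a, b)).top.2.2 + g - 1 := by
  have key : ∀ k : ℕ, (k : ℤ) ≤ g - 1 →
      (x (a, b + 1 + k)).bottom.2.2 = (x (a, b)).top.2.2 + k := by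
    intro k
    induction k with
    | zero => intro _; simpa using (hT hv a b).symm ▸ rfl
    | succ k ih =>
      intro hk
      push_cast at hk ⊢
      have hk' : (k : ℤ) ≤ g - 1 := by omega
      have hPmid : Pb x (b + 1 + k) = 1 := by
        have := hmid (1 + k) (by omega) (by omega)
        convert this using 2; ring
      have hl1 : (x (a, b + 1 + (k:ℤ))).left.1 = 1 := by rw [hP hn hv]; exact hPmid
      have hstep := ((hF hn hv a (b + 1 + k)).vrow hl1).1
      have hTT := hT hv a (b + 1 + k)
      have : (x (a, b + 1 + (k:ℤ) + 1)).bottom.2.2 = (x (a, b + 1 + (k:ℤ))).bottom.2.2 + 1 := by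
        rw [← hTT, hstep]
      have ihk := ih hk'
      have heq : b + 1 + ((k:ℤ) + 1) = b + 1 + (k:ℤ) + 1 := by ring
      rw [heq, this, ihk]; ring
  have hg' : ((g - 1).toNat : ℤ) = g - 1 := Int.toNat_of_nonneg (by omega)
  have := key (g - 1).toNat (by omega)
  rw [hg'] at this
  have heq : b + 1 + (g - 1) = b + g := by ring
  rw [heq] at this
  omega

/-- horizontal chain of third coordinates through columns with `Qb = 1` -/
lemma chainH (hn : 1 ≤ n) (hv : ValidConfig (Text n) x) (a b d : ℤ) (h1 : 1 ≤ d)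
    (hmid : ∀ i : ℤ, 0 < i → i < d → Qb x (a + i) = 1) :
    (x (a + d, b)).left.2.2 = (x (a + 1, b)).left.2.2 + d - 1 := by
  have key : ∀ k : ℕ, (k : ℤ) ≤ d - 1 →
      (x (a + 1 + k, b)).left.2.2 = (x (a + 1, b)).left.2.2 + k := by
    intro k
    induction k with
    | zero => intro _; simp
    | succ k ih =>
      intro hk
      push_cast at hk ⊢
      have hk' : (k : ℤ) ≤ d - 1 := by omega
      have hQmid : Qb x (a + 1 + k) = 1 := by
        have := hmid (1 + k) (by omega) (by omega)
        convert this using 2; ring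
      have hb1 : (x (a + 1 + (k:ℤ), b)).bottom.1 = 1 := by rw [hQ hn hv]; exact hQmid
      have hstep := ((hF hn hv (a + 1 + k) b).hcol hb1).1
      have hRR := hR hv (a + 1 + k) b
      have : (x (a + 1 + (k:ℤ) + 1, b)).left.2.2 = (x (a + 1 + (k:ℤ), b)).left.2.2 + 1 := by
        rw [← hRR, hstep]
      have ihk := ih hk'
      have heq : a + 1 + ((k:ℤ) + 1) = a + 1 + (k:ℤ) + 1 := by ring
      rw [heq, this, ihk]; ring
  have hg' : ((d - 1).toNat : ℤ) = d - 1 := Int.toNat_of_nonneg (by omega)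
  have := key (d - 1).toNat (by omega)
  rw [hg'] at this
  have heq : a + 1 + (d - 1) = a + d := by ring
  rw [heq] at this
  omega

/-- the key relation between consecutive special rows -/
lemma keyrel (hn : 1 ≤ n) (hv : ValidConfig (Text n) x) (a y g : ℤ)
    (hy : Pb x y = 0) (hg : 1 ≤ g) (hy' : Pb x (y + g) = 0)
    (hmid : ∀ i : ℤ, 0 < i → i < g → Pb x (y + i) = 1) :
    n + (x (a + 1, y + g)).left.2.1 = (x (a, y)).left.2.1 + Qb x a + g - 1 := by
  have hl0 : (x (a, y)).left.1 = 0 := by rw [hP hn hv]; exact hy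
  have htop := ((hF hn hv a y).hrow hl0).1
  have hbQ : (x (a, y)).bottom.1 = Qb x a := hQ hn hv a y
  have hchain := chainV hn hv a y g hg hmid
  have hl0' : (x (a, y + g)).left.1 = 0 := by rw [hP hn hv]; exact hy'
  have hbot := ((hF hn hv a (y + g)).hrow hl0').2
  have hr : (x (a, y + g)).right.2.1 = (x (a + 1, y + g)).left.2.1 := by
    rw [hR hv a (y + g)]
  rw [hr] at hbot
  omega

end Stmt14Aux

namespace Stmt14Aux

variable {n : ℤ} {x : ℤ × ℤ → WangTile Lbl}

lemma existsQ0_right (hn : 1 ≤ n) (hv : ValidConfig (Text n) x) (a : ℤ) :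
    ∃ k : ℕ, Qb x (a + 1 + k) = 0 := by
  by_contra h
  push_neg at h
  have hq1 : ∀ k : ℕ, Qb x (a + 1 + k) = 1 := fun k =>
    (Qb01 hn hv (a + 1 + k)).resolve_left (h k)
  have key : ∀ k : ℕ, (x (a + 1 + k, 0)).left.2.2 = (x (a + 1, 0)).left.2.2 + k := by
    intro k
    induction k with
    | zero => simp
    | succ k ih =>
      have hb1 : (x (a + 1 + (k:ℤ), 0)).bottom.1 = 1 := by rw [hQ hn hv]; exact hq1 k
      have hstep := ((hF hn hv (a + 1 + k) 0).hcol hb1).1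
      have : (x (a + 1 + (k:ℤ) + 1, 0)).left.2.2 = (x (a + 1 + (k:ℤ), 0)).left.2.2 + 1 := by
        rw [← hR hv (a + 1 + k) 0, hstep]
      push_cast
      have heq : a + 1 + ((k:ℤ) + 1) = a + 1 + (k:ℤ) + 1 := by ring
      rw [heq, this, ih]; ring
  set k₀ : ℕ := (n + 1).toNat with hk₀
  have hcast : ((k₀ : ℤ)) = n + 1 := Int.toNat_of_nonneg (by omega)
  have h1 := key k₀
  have hb1 : (x (a + 1 + (k₀:ℤ), 0)).bottom.1 = 1 := by rw [hQ hn hv]; exact hq1 k₀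
  have hbound := ((hF hn hv (a + 1 + k₀) 0).hcol hb1).2
  have hb1' : (x (a + 1, 0)).bottom.1 = 1 := by
    rw [hQ hn hv]
    have := hq1 0; simpa using this
  have hbound' := ((hF hn hv (a + 1) 0).hcol hb1').2
  omega

lemma existsQ0_left (hn : 1 ≤ n) (hv : ValidConfig (Text n) x) (a : ℤ) :
    ∃ k : ℕ, Qb x (a - 1 - k) = 0 := by
  by_contra h
  push_neg at h
  have hq1 : ∀ k : ℕ, Qb x (a - 1 - k) = 1 := fun k =>
    (Qb01 hn hv (a - 1 - k)).resolve_left (h k)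
  have key : ∀ k : ℕ, (x (a - 1 - k, 0)).left.2.2 = (x (a - 1, 0)).left.2.2 - k := by
    intro k
    induction k with
    | zero => simp
    | succ k ih =>
      have hb1 : (x (a - 1 - ((k:ℤ)+1), 0)).bottom.1 = 1 := by
        rw [hQ hn hv]
        have := hq1 (k+1); push_cast at this; exact this
      have hstep := ((hF hn hv (a - 1 - ((k:ℤ)+1)) 0).hcol hb1).1
      have heq2 : a - 1 - ((k:ℤ)+1) + 1 = a - 1 - k := by ring
      have : (x (a - 1 - (k:ℤ), 0)).left.2.2 = (x (a - 1 - ((k:ℤ)+1), 0)).left.2.2 + 1 := by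
        rw [← heq2, ← hR hv (a - 1 - ((k:ℤ)+1)) 0, hstep]
      push_cast
      omega
  set k₀ : ℕ := (n + 1).toNat with hk₀
  have hcast : ((k₀ : ℤ)) = n + 1 := Int.toNat_of_nonneg (by omega)
  have h1 := key k₀
  have hb1 : (x (a - 1 - (k₀:ℤ), 0)).bottom.1 = 1 := by rw [hQ hn hv]; exact hq1 k₀
  have hbound := ((hF hn hv (a - 1 - k₀) 0).hcol hb1).2
  have hb1' : (x (a - 1, 0)).bottom.1 = 1 := by
    rw [hQ hn hv]
    have := hq1 0; simpa using this
  have hbound' := ((hF hn hv (a - 1) 0).hcol hb1').2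
  omega

lemma existsP0_up (hn : 1 ≤ n) (hv : ValidConfig (Text n) x) (b : ℤ) :
    ∃ k : ℕ, Pb x (b + 1 + k) = 0 := by
  by_contra h
  push_neg at h
  have hq1 : ∀ k : ℕ, Pb x (b + 1 + k) = 1 := fun k =>
    (Pb01 hn hv (b + 1 + k)).resolve_left (h k)
  have key : ∀ k : ℕ, (x (0, b + 1 + k)).bottom.2.2 = (x (0, b + 1)).bottom.2.2 + k := by
    intro k
    induction k with
    | zero => simp
    | succ k ih =>
      have hl1 : (x (0, b + 1 + (k:ℤ))).left.1 = 1 := by rw [hP hn hv]; exact hq1 k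
      have hstep := ((hF hn hv 0 (b + 1 + k)).vrow hl1).1
      have : (x (0, b + 1 + (k:ℤ) + 1)).bottom.2.2 = (x (0, b + 1 + (k:ℤ))).bottom.2.2 + 1 := by
        rw [← hT hv 0 (b + 1 + k), hstep]
      push_cast
      have heq : b + 1 + ((k:ℤ) + 1) = b + 1 + (k:ℤ) + 1 := by ring
      rw [heq, this, ih]; ring
  set k₀ : ℕ := (n + 1).toNat with hk₀
  have hcast : ((k₀ : ℤ)) = n + 1 := Int.toNat_of_nonneg (by omega)
  have h1 := key k₀
  have hl1 : (x (0, b + 1 + (k₀:ℤ))).left.1 = 1 := by rw [hP hn hv]; exact hq1 k₀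
  have hbound := ((hF hn hv 0 (b + 1 + k₀)).vrow hl1).2
  have hl1' : (x (0, b + 1)).left.1 = 1 := by
    rw [hP hn hv]
    have := hq1 0; simpa using this
  have hbound' := ((hF hn hv 0 (b + 1)).vrow hl1').2
  omega

lemma existsP0_down (hn : 1 ≤ n) (hv : ValidConfig (Text n) x) (b : ℤ) :
    ∃ k : ℕ, Pb x (b - 1 - k) = 0 := by
  by_contra h
  push_neg at h
  have hq1 : ∀ k : ℕ, Pb x (b - 1 - k) = 1 := fun k =>
    (Pb01 hn hv (b - 1 - k)).resolve_left (h k)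
  have key : ∀ k : ℕ, (x (0, b - 1 - k)).bottom.2.2 = (x (0, b - 1)).bottom.2.2 - k := by
    intro k
    induction k with
    | zero => simp
    | succ k ih =>
      have hl1 : (x (0, b - 1 - ((k:ℤ)+1))).left.1 = 1 := by
        rw [hP hn hv]
        have := hq1 (k+1); push_cast at this; exact this
      have hstep := ((hF hn hv 0 (b - 1 - ((k:ℤ)+1))).vrow hl1).1
      have heq2 : b - 1 - ((k:ℤ)+1) + 1 = b - 1 - k := by ring
      have : (x (0, b - 1 - (k:ℤ))).bottom.2.2 = (x (0, b - 1 - ((k:ℤ)+1))).bottom.2.2 + 1 := by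
        rw [← heq2, ← hT hv 0 (b - 1 - ((k:ℤ)+1)), hstep]
      push_cast
      omega
  set k₀ : ℕ := (n + 1).toNat with hk₀
  have hcast : ((k₀ : ℤ)) = n + 1 := Int.toNat_of_nonneg (by omega)
  have h1 := key k₀
  have hl1 : (x (0, b - 1 - (k₀:ℤ))).left.1 = 1 := by rw [hP hn hv]; exact hq1 k₀
  have hbound := ((hF hn hv 0 (b - 1 - k₀)).vrow hl1).2
  have hl1' : (x (0, b - 1)).left.1 = 1 := by
    rw [hP hn hv]
    have := hq1 0; simpa using this
  have hbound' := ((hF hn hv 0 (b - 1)).vrow hl1').2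
  omega

open Classical in
lemma nextP0 (hn : 1 ≤ n) (hv : ValidConfig (Text n) x) (b : ℤ) :
    ∃ g : ℤ, 1 ≤ g ∧ Pb x (b + g) = 0 ∧ ∀ i : ℤ, 0 < i → i < g → Pb x (b + i) = 1 := by
  have hex := existsP0_up hn hv b
  classical
  set k₀ := Nat.find hex with hk₀
  refine ⟨k₀ + 1, by omega, ?_, ?_⟩
  · have := Nat.find_spec hex
    rw [← hk₀] at this
    convert this using 2; push_cast; ring
  · intro i hi1 hi2
    have hj : (i - 1).toNat < k₀ := by omega
    have := Nat.find_min hex hj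
    have hcast : b + 1 + ((i-1).toNat : ℤ) = b + i := by
      have : ((i-1).toNat : ℤ) = i - 1 := Int.toNat_of_nonneg (by omega)
      omega
    rw [hcast] at this
    exact (Pb01 hn hv (b + i)).resolve_left this

open Classical in
lemma prevP0 (hn : 1 ≤ n) (hv : ValidConfig (Text n) x) (b : ℤ) :
    ∃ h : ℤ, 1 ≤ h ∧ Pb x (b - h) = 0 ∧ ∀ i : ℤ, 0 < i → i < h → Pb x (b - h + i) = 1 := by
  have hex := existsP0_down hn hv b
  classical
  set k₀ := Nat.find hex with hk₀
  refine ⟨k₀ + 1, by omega, ?_, ?_⟩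
  · have := Nat.find_spec hex
    rw [← hk₀] at this
    convert this using 2; push_cast; ring
  · intro i hi1 hi2
    -- b - (k₀+1) + i = b - 1 - (k₀ - i) ; need k₀ - i ≥ 0 and < k₀
    have hj : (k₀ - i).toNat < k₀ := by omega
    have := Nat.find_min hex hj
    have hcast : b - 1 - ((k₀ - i).toNat : ℤ) = b - ((k₀:ℤ) + 1) + i := by
      have : (((k₀:ℤ) - i).toNat : ℤ) = (k₀:ℤ) - i := Int.toNat_of_nonneg (by omega)
      push_cast
      omega
    rw [hcast] at this
    exact (Pb01 hn hv _).resolve_left this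

open Classical in
lemma nextQ0 (hn : 1 ≤ n) (hv : ValidConfig (Text n) x) (a : ℤ) :
    ∃ d : ℤ, 1 ≤ d ∧ Qb x (a + d) = 0 ∧ ∀ i : ℤ, 0 < i → i < d → Qb x (a + i) = 1 := by
  have hex := existsQ0_right hn hv a
  classical
  set k₀ := Nat.find hex with hk₀
  refine ⟨k₀ + 1, by omega, ?_, ?_⟩
  · have := Nat.find_spec hex
    rw [← hk₀] at this
    convert this using 2; push_cast; ring
  · intro i hi1 hi2
    have hj : (i - 1).toNat < k₀ := by omega
    have := Nat.find_min hex hj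
    have hcast : a + 1 + ((i-1).toNat : ℤ) = a + i := by
      have : ((i-1).toNat : ℤ) = i - 1 := Int.toNat_of_nonneg (by omega)
      omega
    rw [hcast] at this
    exact (Qb01 hn hv (a + i)).resolve_left this

end Stmt14Aux

namespace Stmt14Aux

variable {n : ℤ} {x : ℤ × ℤ → WangTile Lbl}

/-- a "descent" in a special row -/
def Desc (x : ℤ × ℤ → WangTile Lbl) (z y : ℤ) : Prop :=
  Pb x y = 0 ∧ Qb x z = 1 ∧ (x (z, y)).left.2.1 = 1 ∧ (x (z + 1, y)).left.2.1 = 0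

lemma l21_01 (hn : 1 ≤ n) (hv : ValidConfig (Text n) x) (a b : ℤ) :
    (x (a, b)).left.2.1 = 0 ∨ (x (a, b)).left.2.1 = 1 := (hF hn hv a b).l21

lemma stepUp (hn : 1 ≤ n) (hv : ValidConfig (Text n) x) {z y : ℤ} (hd : Desc x z y) :
    Pb x (y + n) = 0 ∧ (∀ i : ℤ, 0 < i → i < n → Pb x (y + i) = 1) ∧ Desc x (z + 1) (y + n) := by
  obtain ⟨hy, hqz, hL1, hL0⟩ := hd
  obtain ⟨g, hg1, hg0, hgmid⟩ := nextP0 hn hv y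
  have e1 := keyrel hn hv z y g hy hg1 hg0 hgmid
  have e2 := keyrel hn hv (z + 1) y g hy hg1 hg0 hgmid
  have d1 := l21_01 hn hv (z + 1) (y + g)
  have d2 := l21_01 hn hv (z + 1 + 1) (y + g)
  have dq := Qb01 hn hv (z + 1)
  rw [hL1] at e1
  rw [hL0] at e2
  rw [hqz] at e1
  have hgn : g = n := by omega
  subst hgn
  exact ⟨hg0, hgmid, hg0, by omega, by omega, by omega⟩

lemma stepDown (hn : 1 ≤ n) (hv : ValidConfig (Text n) x) {z y : ℤ} (hd : Desc x z y) :
    Pb x (y - n) = 0 ∧ (∀ i : ℤ, 0 < i → i < n → Pb x (y - n + i) = 1) ∧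
      Desc x (z - 1) (y - n) := by
  obtain ⟨hy, hqz, hL1, hL0⟩ := hd
  obtain ⟨h, hh1, hh0, hhmid⟩ := prevP0 hn hv y
  have hy'' : Pb x (y - h + h) = 0 := by rw [show y - h + h = y by ring]; exact hy
  have e1 := keyrel hn hv z (y - h) h hh0 hh1 hy'' hhmid
  have e2 := keyrel hn hv (z - 1) (y - h) h hh0 hh1 hy'' hhmid
  rw [show y - h + h = y by ring] at e1 e2
  rw [show z - 1 + 1 = z by ring] at e2
  rw [hL0] at e1
  rw [hL1] at e2
  have d1 := l21_01 hn hv z (y - h)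
  have d2 := l21_01 hn hv (z - 1) (y - h)
  have dq1 := Qb01 hn hv z
  have dq2 := Qb01 hn hv (z - 1)
  rw [hqz] at e1
  have hhn : h = n := by omega
  subst hhn
  refine ⟨hh0, hhmid, hh0, by omega, by omega, ?_⟩
  rw [show z - 1 + 1 = z by ring]
  omega

lemma descChain (hn : 1 ≤ n) (hv : ValidConfig (Text n) x) {z₀ y₀ : ℤ} (hd : Desc x z₀ y₀) :
    ∀ j : ℤ, Desc x (z₀ + j) (y₀ + j * n) := by
  intro j
  induction j using Int.induction_on with
  | zero => simpa using hd
  | succ j ih =>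
    have := (stepUp hn hv ih).2.2
    have he : z₀ + (j : ℤ) + 1 = z₀ + ((j : ℤ) + 1) := by ring
    have he2 : y₀ + (j : ℤ) * n + n = y₀ + ((j : ℤ) + 1) * n := by ring
    rw [he, he2] at this
    exact this
  | pred j ih =>
    have := (stepDown hn hv ih).2.2
    have he : z₀ + (-(j:ℤ)) - 1 = z₀ + (-(j:ℤ) - 1) := by ring
    have he2 : y₀ + (-(j:ℤ)) * n - n = y₀ + (-(j:ℤ) - 1) * n := by ring
    rw [he, he2] at this
    exact this

/-- main lemma: no antigreen tiles in a valid extended configuration -/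
lemma noanti (hn : 1 ≤ n) (hv : ValidConfig (Text n) x) (z y : ℤ) :
    x (z, y) ∉ antiH n := by
  intro hmem
  obtain ⟨i, hi1, hi2, heq⟩ := hmem
  -- extract the descent
  have hdesc : Desc x z y := by
    refine ⟨?_, ?_, ?_, ?_⟩
    · rw [← hP hn hv z y, heq]
    · rw [← hQ hn hv z y, heq]
    · rw [heq]
    · rw [← hR hv z y, heq]
  -- all rows y + j*n are consecutive special rows
  have hrows : ∀ j : ℤ, Pb x (y + j * n) = 0 ∧ Pb x (y + j * n + n) = 0 ∧
      (∀ i : ℤ, 0 < i → i < n → Pb x (y + j * n + i) = 1) := by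
    intro j
    have hdj := descChain hn hv hdesc j
    exact ⟨hdj.1, (stepUp hn hv hdj).1, (stepUp hn hv hdj).2.1⟩
  -- the key relation for rows y+j*n with gap n, at any position
  have hkey : ∀ (a : ℤ) (j : ℤ),
      n + (x (a + 1, y + j * n + n)).left.2.1 = (x (a, y + j * n)).left.2.1 + Qb x a + n - 1 :=
    fun a j => keyrel hn hv a (y + j * n) n (hrows j).1 hn (hrows j).2.1 (hrows j).2.2
  -- main downward induction along special columns
  have main : ∀ (k : ℕ) (a : ℤ), Qb x a = 0 →
      (∀ j : ℤ, (x (a - k, y + j * n)).left.2.1 = 1) ∧ (1 ≤ k → Qb x (a - k) = 1) := by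
    intro k
    induction k with
    | zero =>
      intro a ha
      refine ⟨fun j => ?_, fun h => absurd h (by omega)⟩
      have e := hkey a j
      rw [ha] at e
      have d1 := l21_01 hn hv a (y + j * n)
      have d2 := l21_01 hn hv (a + 1) (y + j * n + n)
      simp only [Nat.cast_zero, sub_zero]
      omega
    | succ k ih =>
      intro a ha
      have step : ∀ j : ℤ, (x (a - k - 1, y + j * n)).left.2.1 = 1 ∧ Qb x (a - k - 1) = 1 := by
        intro j
        have prev := (ih a ha).1 (j + 1)
        have e := hkey (a - k - 1) j
        rw [show a - (k:ℤ) - 1 + 1 = a - k by ring] at e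
        rw [show y + ((j:ℤ)+1) * n = y + j * n + n by ring] at prev
        rw [prev] at e
        have d1 := l21_01 hn hv (a - k - 1) (y + j * n)
        have dq := Qb01 hn hv (a - k - 1)
        constructor <;> omega
      have hcast : a - ((k:ℕ)+1 : ℕ) = a - (k:ℤ) - 1 := by push_cast; ring
      rw [hcast]
      exact ⟨fun j => (step j).1, fun _ => (step 0).2⟩
  -- get a special column, then a special column to its left: contradiction
  obtain ⟨k₁, hk₁⟩ := existsQ0_right hn hv z
  set a := z + 1 + (k₁ : ℤ) with ha
  obtain ⟨k₂, hk₂⟩ := existsQ0_left hn hv a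
  have := (main (k₂ + 1) a hk₁).2 (by omega)
  rw [show a - ((k₂:ℕ)+1 : ℕ) = a - 1 - k₂ by push_cast; ring] at this
  omega

end Stmt14Aux

namespace Stmt14Aux

variable {n : ℤ} {x : ℤ × ℤ → WangTile Lbl}

lemma noj0011 (hn : 1 ≤ n) (hv : ValidConfig (Text n) x) (a b : ℤ) :
    x (a, b) ≠ junctionTile n 0 0 1 1 := by
  intro h
  have hPb : Pb x b = 0 := by rw [← hP hn hv a b, h]; rfl
  have hQa : Qb x a = 0 := by rw [← hQ hn hv a b, h]; rfl
  obtain ⟨d, hd1, hd0, hdmid⟩ := nextQ0 hn hv a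
  -- row b: the distance to the next special column is at least n+1
  have hrt0 : (x (a+1, b)).left.2.2 = 0 := by rw [← hR hv a b, h]; rfl
  have hrt1 : (x (a+1, b)).left.2.1 = 0 := by rw [← hR hv a b, h]; rfl
  have hch : (x (a + d, b)).left.2.2 = (x (a+1, b)).left.2.2 + d - 1 :=
    chainH hn hv a b d hd1 hdmid
  have hb0 : (x (a+d, b)).bottom.1 = 0 := by rw [hQ hn hv]; exact hd0
  have hv1 : (x (a+d, b)).left.2.2 = n + (x (a+d, b)).top.2.1 :=
    ((hF hn hv (a+d) b).vcol hb0).2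
  have htc : (x (a+d, b)).top.2.1 = (x (a+d, b+1)).bottom.2.1 := by rw [hT hv]
  have ht01 := (hF hn hv (a+d) (b+1)).b21
  -- the tile above the junction
  have hbot1 : (x (a, b+1)).bottom.2.1 = 1 := by rw [← hT hv a b, h]; rfl
  have hbot2 : (x (a, b+1)).bottom.2.2 = 1 := by rw [← hT hv a b, h]; rfl
  have hq0 : (x (a, b+1)).bottom.1 = 0 := by rw [hQ hn hv]; exact hQa
  have hvc : (x (a, b+1)).right.2.2 = (x (a, b+1)).bottom.2.1 + (x (a, b+1)).left.1 :=
    ((hF hn hv a (b+1)).vcol hq0).1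
  have hr22 : (x (a, b+1)).right.2.2 = (x (a+1, b+1)).left.2.2 := by rw [hR hv]
  -- row b+1 chain
  have hch2 : (x (a + d, b+1)).left.2.2 = (x (a+1, b+1)).left.2.2 + d - 1 :=
    chainH hn hv a (b+1) d hd1 hdmid
  have hb0' : (x (a+d, b+1)).bottom.1 = 0 := by rw [hQ hn hv]; exact hd0
  have hv2 : (x (a+d, b+1)).left.2.2 = n + (x (a+d, b+1)).top.2.1 :=
    ((hF hn hv (a+d) (b+1)).vcol hb0').2
  have htc2 : (x (a+d, b+1)).top.2.1 = (x (a+d, b+1+1)).bottom.2.1 := by rw [hT hv]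
  have ht02 := (hF hn hv (a+d) (b+1+1)).b21
  rcases Pb01 hn hv (b+1) with hP0 | hP1
  · -- the row above is also a junction row: forces n = 1, d = 2, then a clash
    have hl0 : (x (a, b+1)).left.1 = 0 := by rw [hP hn hv]; exact hP0
    have hrow1 : (x (a, b+1)).bottom.2.2 = n + (x (a, b+1)).right.2.1 :=
      ((hF hn hv a (b+1)).hrow hl0).2
    have hr21 : (x (a, b+1)).right.2.1 = (x (a+1, b+1)).left.2.1 := by rw [hR hv]
    have hd21 := (hF hn hv (a+1) (b+1)).l21
    have hn1 : n = 1 := by omega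
    have hd2 : d = 2 := by omega
    subst hd2
    -- tile (a+1, b) is green of index 0, its top third coordinate is 1
    have hmid1 : (x (a+1, b)).bottom.1 = 1 := by
      rw [hQ hn hv]; exact hdmid 1 (by omega) (by omega)
    have hl0b : (x (a+1, b)).left.1 = 0 := by rw [hP hn hv]; exact hPb
    have hg1 : (x (a+1, b)).top.2.2 = (x (a+1, b)).left.2.1 + (x (a+1, b)).bottom.1 :=
      ((hF hn hv (a+1) b).hrow hl0b).1
    -- tile (a+1, b+1)
    have hl0c : (x (a+1, b+1)).left.1 = 0 := by rw [hP hn hv]; exact hP0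
    have hg2 : (x (a+1, b+1)).bottom.2.2 = n + (x (a+1, b+1)).right.2.1 :=
      ((hF hn hv (a+1) (b+1)).hrow hl0c).2
    have hbt : (x (a+1, b)).top.2.2 = (x (a+1, b+1)).bottom.2.2 := by rw [hT hv]
    have hr21' : (x (a+1, b+1)).right.2.1 = (x (a+1+1, b+1)).left.2.1 := by rw [hR hv]
    rw [show a+1+1 = a+2 by ring] at hr21'
    -- tile (a+2, b+1) is a junction with left.2.2 = 2 > left.2.1 + n
    have hl0d : (x (a+2, b+1)).left.1 = 0 := by rw [hP hn hv]; exact hP0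
    have hb0d : (x (a+2, b+1)).bottom.1 = 0 := by rw [hQ hn hv]; exact hd0
    have hj := (hF hn hv (a+2) (b+1)).junc hl0d hb0d
    omega
  · -- the row above is a white/vertical row
    have hl1 : (x (a, b+1)).left.1 = 1 := by rw [hP hn hv]; exact hP1
    omega

end Stmt14Aux

namespace Stmt14Aux

variable {n : ℤ} {x : ℤ × ℤ → WangTile Lbl}

lemma hat_hat (t : WangTile Lbl) : hatT (hatT t) = t := rfl

lemma subW : whiteTiles n ⊆ Text n := fun t h => by
  simp only [Text, Set.mem_union]; tauto
lemma subB : blueH n ⊆ Text n := fun t h => by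
  simp only [Text, Set.mem_union]; tauto
lemma subG : greenH n ⊆ Text n := fun t h => by
  simp only [Text, Set.mem_union]; tauto
lemma subY : yellowH n ⊆ Text n := fun t h => by
  simp only [Text, Set.mem_union]; tauto
lemma subA : antiH n ⊆ Text n := fun t h => by
  simp only [Text, Set.mem_union]; tauto
lemma subHB : hatT '' blueH n ⊆ Text n := fun t h => by
  simp only [Text, Set.mem_union]; tauto
lemma subHG : hatT '' greenH n ⊆ Text n := fun t h => by
  simp only [Text, Set.mem_union]; tauto
lemma subHY : hatT '' yellowH n ⊆ Text n := fun t h => by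
  simp only [Text, Set.mem_union]; tauto
lemma subHA : hatT '' antiH n ⊆ Text n := fun t h => by
  simp only [Text, Set.mem_union]; tauto
lemma subJ : junctions n ⊆ Text n := fun t h => by
  simp only [Text, Set.mem_union]; tauto

lemma hat_text {t : WangTile Lbl} (ht : t ∈ Text n) : hatT t ∈ Text n := by
  rcases mem_cases ht with ⟨i,j,h1,h2,h3,h4,rfl⟩|⟨i,h1,h2,rfl⟩|⟨i,h1,h2,rfl⟩|⟨i,h1,h2,rfl⟩|
    ⟨i,h1,h2,rfl⟩|⟨i,h1,h2,rfl⟩|⟨i,h1,h2,rfl⟩|⟨i,h1,h2,rfl⟩|⟨i,h1,h2,rfl⟩|⟨k,l,r,s,hkl,hrs,rfl⟩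
  · exact subW ⟨j, i, h3, h4, h1, h2, rfl⟩
  · exact subHB ⟨_, ⟨i, h1, h2, rfl⟩, rfl⟩
  · exact subHG ⟨_, ⟨i, h1, h2, rfl⟩, rfl⟩
  · exact subHY ⟨_, ⟨i, h1, h2, rfl⟩, rfl⟩
  · exact subHA ⟨_, ⟨i, h1, h2, rfl⟩, rfl⟩
  · exact subB ⟨i, h1, h2, rfl⟩
  · exact subG ⟨i, h1, h2, rfl⟩
  · exact subY ⟨i, h1, h2, rfl⟩
  · exact subA ⟨i, h1, h2, rfl⟩
  · refine subJ ⟨r, s, k, l, ?_, ?_, rfl⟩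
    · rcases hrs with ⟨rfl,rfl⟩|⟨rfl,rfl⟩|⟨rfl,rfl⟩ <;> simp [jPairs]
    · rcases hkl with ⟨rfl,rfl⟩|⟨rfl,rfl⟩|⟨rfl,rfl⟩ <;> simp [jPairs]

lemma validTranspose (hv : ValidConfig (Text n) x) :
    ValidConfig (Text n) (fun m : ℤ × ℤ => hatT (x (m.2, m.1))) := by
  refine ⟨fun m => hat_text (hv.1 (m.2, m.1)), fun m => ?_, fun m => ?_⟩
  · exact hv.2.2 (m.2, m.1)
  · exact hv.2.1 (m.2, m.1)

lemma nobluen (hn : 1 ≤ n) (hv : ValidConfig (Text n) x) (a b : ℤ) :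
    x (a, b) ≠ ⟨(0,0,n+1),(1,1,1),(0,0,n),(1,1,n)⟩ := by
  intro h
  have hL : (x (a+1, b)).left = (0, 0, n+1) := by rw [← hR hv a b, h]
  exact (hF hn hv (a+1) b).nol hL

lemma nohbluen (hn : 1 ≤ n) (hv : ValidConfig (Text n) x) (a b : ℤ) :
    x (a, b) ≠ hatT ⟨(0,0,n+1),(1,1,1),(0,0,n),(1,1,n)⟩ := by
  intro h
  have hB : (x (a, b+1)).bottom = (0, 0, n+1) := by rw [← hT hv a b, h]; rfl
  exact (hF hn hv a (b+1)).nob hB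

end Stmt14Aux


open Stmt14Aux in
/-- `Ω'_n = Ω_n`; equivalently every valid configuration over `T'_n`
takes all its values in `T_n`. -/
theorem stmt14 (n : ℤ) (hn : 1 ≤ n) :
    {x : ℤ × ℤ → WangTile Lbl | ValidConfig (Text n) x} =
      {x : ℤ × ℤ → WangTile Lbl | ValidConfig (Tmet n) x} ∧
    ∀ x : ℤ × ℤ → WangTile Lbl, ValidConfig (Text n) x → ∀ m : ℤ × ℤ, x m ∈ Tmet n := by
  have main : ∀ x : ℤ × ℤ → WangTile Lbl, ValidConfig (Text n) x → ∀ m : ℤ × ℤ, x m ∈ Tmet n := by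
    intro x hv m
    obtain ⟨a, b⟩ := m
    refine ⟨hv.1 (a, b), ?_⟩
    intro hbad
    have hvT : ValidConfig (Text n) (fun m : ℤ × ℤ => hatT (x (m.2, m.1))) := validTranspose hv
    rcases hbad with (h1 | h2) | h3
    · exact noanti hn hv a b h1
    · obtain ⟨t', ht', heq⟩ := h2
      have hmem : hatT (x (a, b)) ∈ antiH n := by rw [← heq, hat_hat]; exact ht'
      exact noanti hn hvT b a hmem
    · simp only [Dset, Set.mem_insert_iff, Set.mem_singleton_iff] at h3
      rcases h3 with h | h | h | h
      · exact nobluen hn hv a b h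
      · exact nohbluen hn hv a b h
      · exact noj0011 hn hv a b h
      · have hmem : (fun m : ℤ × ℤ => hatT (x (m.2, m.1))) (b, a) = junctionTile n 0 0 1 1 := by
          show hatT (x (a, b)) = _
          rw [h]; rfl
        exact noj0011 hn hvT b a hmem
  constructor
  · ext x
    simp only [Set.mem_setOf_eq]
    constructor
    · intro hv
      exact ⟨fun m => main x hv m, hv.2.1, hv.2.2⟩
    · intro hv
      exact ⟨fun m => (hv.1 m).1, hv.2.1, hv.2.2⟩
  · exact main
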